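/- Let Ω ⊆ ℝ³ be a bounded Lebesgue-measurable set of positive measure, let ψ : Ω → ℝ be a bounded measurable function, let a > 0 and γ > 1, and let m ∈ ℝ satisfy m > ∫_Ω ((γ−1)/(aγ) · (ψ(x) − essinf_Ω ψ))^{1/(γ−1)} dx. Then there exists a unique real number λ < essinf_Ω ψ such that ∫_Ω ((γ−1)/(aγ) · (ψ(x) − λ))^{1/(γ−1)} dx = m. -/

import Mathlib

open MeasureTheory

/-- The algebraic core of Lemma 1.1 / Remark 1.1: unique Lagrange multiplier fixing the
total mass of the steady state density. -/
theorem steady_state_multiplier_exists_unique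
    (Ω : Set (EuclideanSpace ℝ (Fin 3))) (hΩmeas : MeasurableSet Ω)
    (hΩbdd : Bornology.IsBounded Ω) (hΩpos : 0 < volume Ω)
    (ψ : EuclideanSpace ℝ (Fin 3) → ℝ) (hψmeas : Measurable ψ)
    (hψbdd : ∃ C : ℝ, ∀ x ∈ Ω, |ψ x| ≤ C)
    (a γ m : ℝ) (ha : 0 < a) (hγ : 1 < γ)
    (hm : (∫ x in Ω, ((γ - 1) / (a * γ) *
        (ψ x - essInf ψ (volume.restrict Ω))) ^ (1 / (γ - 1))) < m) :
    ∃! l : ℝ, l < essInf ψ (volume.restrict Ω) ∧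
      (∫ x in Ω, ((γ - 1) / (a * γ) * (ψ x - l)) ^ (1 / (γ - 1))) = m := by
  obtain ⟨C, hC⟩ := hψbdd
  set μ := volume.restrict Ω with hμ
  set M := essInf ψ μ with hM
  set c : ℝ := (γ - 1) / (a * γ) with hcdef
  set p : ℝ := 1 / (γ - 1) with hpdef
  have hγ0 : (0:ℝ) < γ - 1 := by linarith
  have hc : 0 < c := div_pos hγ0 (by positivity)
  have hp : 0 < p := by positivity
  have hμuniv : μ Set.univ = volume Ω := by
    rw [hμ, Measure.restrict_apply_univ]
  have hμfin : μ Set.univ < ⊤ := by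
    rw [hμuniv]; exact hΩbdd.measure_lt_top
  haveI : IsFiniteMeasure μ := ⟨hμfin⟩
  have haemem : ∀ᵐ x ∂μ, x ∈ Ω := ae_restrict_mem hΩmeas
  have haeC : ∀ᵐ x ∂μ, |ψ x| ≤ C := haemem.mono fun x hx => hC x hx
  have hbdd : Filter.IsBoundedUnder (· ≥ ·) (ae μ) ψ :=
    ⟨-C, haeC.mono fun x hx => (abs_le.mp hx).1⟩
  have haeM : ∀ᵐ x ∂μ, M ≤ ψ x := ae_essInf_le hbdd
  set F : ℝ → ℝ := fun l => ∫ x, (c * (ψ x - l)) ^ p ∂μ with hF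
  -- integrability
  have hint : ∀ l : ℝ, Integrable (fun x => (c * (ψ x - l)) ^ p) μ := by
    intro l
    have hmeas : AEStronglyMeasurable (fun x => (c * (ψ x - l)) ^ p) μ := by
      apply Measurable.aestronglyMeasurable
      exact (Real.continuous_rpow_const hp.le).measurable.comp
        ((measurable_const.mul (hψmeas.sub measurable_const)))
    refine ⟨hmeas, ?_⟩
    apply HasFiniteIntegral.of_bounded (C := (c * (C + |l|)) ^ p)
    refine haeC.mono fun x hx => ?_
    calc ‖(c * (ψ x - l)) ^ p‖ = |(c * (ψ x - l)) ^ p| := rfl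
      _ ≤ |c * (ψ x - l)| ^ p := Real.abs_rpow_le_abs_rpow _ _
      _ ≤ (c * (C + |l|)) ^ p := by
          apply Real.rpow_le_rpow (abs_nonneg _) _ hp.le
          rw [abs_mul, abs_of_pos hc]
          have : |ψ x - l| ≤ C + |l| := (abs_sub _ _).trans (by gcongr)
          exact mul_le_mul_of_nonneg_left this hc.le
  -- continuity of F
  have hcont : Continuous F := by
    rw [continuous_iff_continuousAt]
    intro l₀
    apply continuousAt_of_dominated (bound := fun _ => (c * (C + |l₀| + 1)) ^ p)
    · exact Filter.Eventually.of_forall fun l => (hint l).1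
    · filter_upwards [Metric.ball_mem_nhds l₀ one_pos] with l hl
      refine haeC.mono fun x hx => ?_
      have hll : |l| ≤ |l₀| + 1 := by
        have := Real.dist_eq l l₀ ▸ (Metric.mem_ball.mp hl).le
        calc |l| = |l₀ + (l - l₀)| := by ring_nf
          _ ≤ |l₀| + |l - l₀| := abs_add_le _ _
          _ ≤ |l₀| + 1 := by linarith
      calc ‖(c * (ψ x - l)) ^ p‖ = |(c * (ψ x - l)) ^ p| := rfl
        _ ≤ |c * (ψ x - l)| ^ p := Real.abs_rpow_le_abs_rpow _ _
        _ ≤ (c * (C + |l₀| + 1)) ^ p := by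
            apply Real.rpow_le_rpow (abs_nonneg _) _ hp.le
            rw [abs_mul, abs_of_pos hc]
            have : |ψ x - l| ≤ C + |l₀| + 1 :=
              (abs_sub _ _).trans (by linarith)
            exact mul_le_mul_of_nonneg_left this hc.le
    · exact integrable_const _
    · refine Filter.Eventually.of_forall fun x => ?_
      exact (Real.continuousAt_rpow_const _ _ (Or.inr hp.le)).comp
        ((continuous_const.mul ((continuous_const.sub continuous_id))).continuousAt)
  -- strict antitonicity on (-∞, M]
  have hstrict : ∀ l₁ l₂ : ℝ, l₁ < l₂ → l₂ ≤ M → F l₂ < F l₁ := by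
    intro l₁ l₂ h12 h2M
    have hlt : ∀ᵐ x ∂μ, (c * (ψ x - l₂)) ^ p < (c * (ψ x - l₁)) ^ p := by
      refine haeM.mono fun x hx => ?_
      apply Real.rpow_lt_rpow (by nlinarith) (by nlinarith) hp
    have hint' : Integrable
        (fun x => (c * (ψ x - l₁)) ^ p - (c * (ψ x - l₂)) ^ p) μ :=
      (hint l₁).sub (hint l₂)
    have hpos : 0 < ∫ x, ((c * (ψ x - l₁)) ^ p - (c * (ψ x - l₂)) ^ p) ∂μ := by
      rw [integral_pos_iff_support_of_nonneg_ae
        (hlt.mono fun x hx => by simp [sub_nonneg, hx.le]) hint']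
      have : ∀ᵐ x ∂μ, x ∈ Function.support
          fun x => (c * (ψ x - l₁)) ^ p - (c * (ψ x - l₂)) ^ p := by
        refine hlt.mono fun x hx => ?_
        simp only [Function.mem_support]
        exact sub_ne_zero.mpr (ne_of_gt hx)
      have h1 : μ (Function.support
          fun x => (c * (ψ x - l₁)) ^ p - (c * (ψ x - l₂)) ^ p)ᶜ = 0 := this
      have := measure_univ_le_add_compl (μ := μ) (Function.support
          fun x => (c * (ψ x - l₁)) ^ p - (c * (ψ x - l₂)) ^ p)
      rw [h1, add_zero, hμuniv] at this
      exact lt_of_lt_of_le hΩpos this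
    rw [integral_sub (hint l₁) (hint l₂)] at hpos
    simpa [F, sub_pos] using hpos
  -- lower bound: choose l₀ far left
  have hVpos : 0 < (μ Set.univ).toReal := by
    rw [hμuniv]
    exact ENNReal.toReal_pos hΩpos.ne' hΩbdd.measure_lt_top.ne
  set V := (μ Set.univ).toReal with hV
  set K : ℝ := (max (m / V) 1) ^ (1 / p) with hK
  have hKpos : 0 < K := Real.rpow_pos_of_pos (lt_of_lt_of_le one_pos (le_max_right _ _)) _
  have hKp : K ^ p = max (m / V) 1 := by
    rw [hK, ← Real.rpow_mul (le_trans zero_le_one (le_max_right _ _)),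
      one_div, inv_mul_cancel₀ hp.ne', Real.rpow_one]
  set l₀ : ℝ := M - K / c with hl₀
  have hl₀M : l₀ < M := by
    show M - K / c < M
    exact sub_lt_self M (div_pos hKpos hc)
  have hFl₀ : m ≤ F l₀ := by
    have hge : ∀ᵐ x ∂μ, K ^ p ≤ (c * (ψ x - l₀)) ^ p := by
      refine haeM.mono fun x hx => ?_
      apply Real.rpow_le_rpow hKpos.le _ hp.le
      have : K ≤ c * (M - l₀) := by
        rw [hl₀]; field_simp; linarith
      nlinarith
    have := integral_mono_ae (integrable_const (K ^ p)) (hint l₀) hge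
    rw [integral_const] at this
    have hmK : m ≤ V * K ^ p := by
      rw [hKp]
      rcases le_max_iff.mp (le_refl (max (m / V) 1)) with h | h
      · calc m = V * (m / V) := by field_simp
          _ ≤ V * max (m / V) 1 := by
            exact mul_le_mul_of_nonneg_left (le_max_left _ _) hVpos.le
      · calc m = V * (m / V) := by field_simp
          _ ≤ V * max (m / V) 1 := by
            exact mul_le_mul_of_nonneg_left (le_max_left _ _) hVpos.le
    calc m ≤ V * K ^ p := hmK
      _ = V • K ^ p := by rw [smul_eq_mul]
      _ ≤ F l₀ := this
  -- F M = given integral < m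
  have hFM : F M < m := hm
  -- IVT
  obtain ⟨l, hlmem, hlF⟩ := intermediate_value_Icc' hl₀M.le hcont.continuousOn
    (Set.mem_Icc.mpr ⟨hFM.le, hFl₀⟩)
  have hlM : l < M := by
    rcases lt_or_eq_of_le hlmem.2 with h | h
    · exact h
    · exfalso; rw [h] at hlF; exact absurd hlF (ne_of_lt hFM)
  refine ⟨l, ⟨hlM, hlF⟩, ?_⟩
  rintro l' ⟨hl'M, hl'F⟩
  by_contra hne
  have hFl' : F l' = m := hl'F
  rcases lt_or_gt_of_ne hne with h | h
  · have := hstrict l' l h hlM.le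
    rw [hlF, hFl'] at this; exact lt_irrefl m this
  · have := hstrict l l' h hl'M.le
    rw [hlF, hFl'] at this; exact lt_irrefl m this
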